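/- Let V = {v ∈ ℕ^n : v_i ≤ a_i − 1 for all i} and let A be the free K-module with basis (x_v)_{v ∈ V}. For any choice of scalars g_{u,v} ∈ K indexed by pairs u, v ∈ V ∖ {0, a−1}, the K-linear maps ε and Δ defined on the basis by ε(x_v) = δ_{v,0}, Δ(x_0) = x_0 ⊗ x_0, Δ(x_v) = x_0 ⊗ x_v + x_v ⊗ x_0 for v ∈ V ∖ {0, a−1}, and Δ(x_{a−1}) = x_0 ⊗ x_{a−1} + x_{a−1} ⊗ x_0 + Σ_{u,v ∈ V∖{0,a−1}} g_{u,v} · x_u ⊗ x_v, satisfy coassociativity (Δ⊗id)∘Δ = (id⊗Δ)∘Δ and the counit laws (ε⊗id)∘Δ = id = (id⊗ε)∘Δ, so (A, Δ, ε) is a coassociative counital K-coalgebra; moreover each x_v with v ∈ V ∖ {0, a−1} is primitive (Δ(x_v) = x_0 ⊗ x_v + x_v ⊗ x_0 with x_0 the grouplike unit), so the K-subspace of primitive elements has dimension at least (∏_{1 ≤ i ≤ n} a_i) − 2. -/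

import Mathlib

open scoped BigOperators TensorProduct

set_option maxHeartbeats 1000000

noncomputable section

theorem stmt14 {K : Type*} [Field K] {n : ℕ} (hn : 1 ≤ n)
    (a : Fin n → ℕ) (ha : ∀ i, 2 ≤ a i)
    -- `A` is the free `K`-module with basis `(x_v)_{v ∈ V}`, `V = ∏ i, {0, …, a_i - 1}`
    (A : Type*) [AddCommGroup A] [Module K A]
    (x : Module.Basis (∀ i, Fin (a i)) K A)
    -- scalars `g_{u,w}` (only the values on pairs away from `0` and `a-1` are used)
    (g : (∀ i, Fin (a i)) → (∀ i, Fin (a i)) → K)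
    -- `v0` is the zero vector and `va` is the vector `a - 1` of `V`
    (v0 va : ∀ i, Fin (a i))
    (hv0 : ∀ i, (v0 i : ℕ) = 0) (hva : ∀ i, (va i : ℕ) = a i - 1)
    (eps : A →ₗ[K] K) (Δ : A →ₗ[K] A ⊗[K] A)
    -- `ε(x_v) = δ_{v,0}`
    (heps : ∀ v : ∀ i, Fin (a i), eps (x v) = if v = v0 then 1 else 0)
    -- `Δ(x_0) = x_0 ⊗ x_0`
    (hΔ0 : Δ (x v0) = x v0 ⊗ₜ[K] x v0)
    -- `Δ(x_v) = x_0 ⊗ x_v + x_v ⊗ x_0` for `v ∉ {0, a-1}`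
    (hΔmid : ∀ v : ∀ i, Fin (a i), v ≠ v0 → v ≠ va →
      Δ (x v) = x v0 ⊗ₜ[K] x v + x v ⊗ₜ[K] x v0)
    -- `Δ(x_{a-1}) = x_0 ⊗ x_{a-1} + x_{a-1} ⊗ x_0 + Σ_{u,w ∉ {0,a-1}} g_{u,w} x_u ⊗ x_w`
    (hΔtop : Δ (x va) = x v0 ⊗ₜ[K] x va + x va ⊗ₜ[K] x v0 +
      ∑ u : ∀ i, Fin (a i), ∑ w : ∀ i, Fin (a i),
        if u ≠ v0 ∧ u ≠ va ∧ w ≠ v0 ∧ w ≠ va then g u w • (x u ⊗ₜ[K] x w) else 0) :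
    -- coassociativity `(Δ ⊗ id) ∘ Δ = (id ⊗ Δ) ∘ Δ`
    (∀ y : A,
      (TensorProduct.assoc K A A A) ((LinearMap.rTensor A Δ) (Δ y)) =
        (LinearMap.lTensor A Δ) (Δ y)) ∧
    -- left counit law `(ε ⊗ id) ∘ Δ = id`
    (∀ y : A, (TensorProduct.lid K A) ((LinearMap.rTensor A eps) (Δ y)) = y) ∧
    -- right counit law `(id ⊗ ε) ∘ Δ = id`
    (∀ y : A, (TensorProduct.rid K A) ((LinearMap.lTensor A eps) (Δ y)) = y) ∧
    -- the space of primitive elements has dimension at least `(∏ i, a i) - 2`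
    ((∏ i : Fin n, a i) - 2 ≤ Module.finrank K
      (LinearMap.ker (Δ - (TensorProduct.mk K A A (x v0) +
        (TensorProduct.mk K A A).flip (x v0))))) := by
    classical
  have hne : v0 ≠ va := by
    intro h
    have h1 := hv0 ⟨0, hn⟩
    have h2 := hva ⟨0, hn⟩
    have h3 := ha ⟨0, hn⟩
    rw [h] at h1
    omega
  have basis_case : ∀ {M : Type _} [AddCommGroup M] [Module K M]
      (F G : A →ₗ[K] M), (∀ v, F (x v) = G (x v)) → ∀ y, F y = G y := by
    intro M _ _ F G h y
    exact LinearMap.congr_fun (x.ext h) y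
  refine ⟨?_, ?_, ?_, ?_⟩
  · -- coassociativity
    intro y
    refine basis_case
      ((TensorProduct.assoc K A A A).toLinearMap ∘ₗ LinearMap.rTensor A Δ ∘ₗ Δ)
      (LinearMap.lTensor A Δ ∘ₗ Δ) ?_ y
    intro v
    simp only [LinearMap.comp_apply, LinearEquiv.coe_coe]
    by_cases h0 : v = v0
    · subst h0
      simp [hΔ0]
    by_cases hA : v = va
    · rw [hA]
      have l1 : (TensorProduct.assoc K A A A)
          ((LinearMap.rTensor A Δ) (x v0 ⊗ₜ[K] x va)) = x v0 ⊗ₜ[K] (x v0 ⊗ₜ[K] x va) := by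
        rw [LinearMap.rTensor_tmul, hΔ0, TensorProduct.assoc_tmul]
      have l2 : (TensorProduct.assoc K A A A)
          ((LinearMap.rTensor A Δ) (x va ⊗ₜ[K] x v0)) =
          x v0 ⊗ₜ[K] (x va ⊗ₜ[K] x v0) + x va ⊗ₜ[K] (x v0 ⊗ₜ[K] x v0) +
          ∑ u : ∀ i, Fin (a i), ∑ w : ∀ i, Fin (a i),
            if u ≠ v0 ∧ u ≠ va ∧ w ≠ v0 ∧ w ≠ va then
              g u w • (x u ⊗ₜ[K] (x w ⊗ₜ[K] x v0)) else 0 := by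
        rw [LinearMap.rTensor_tmul, hΔtop]
        simp only [TensorProduct.add_tmul, map_add, TensorProduct.assoc_tmul,
          TensorProduct.sum_tmul, map_sum]
        congr 1
        refine Finset.sum_congr rfl fun u _ => Finset.sum_congr rfl fun w _ => ?_
        split_ifs with h
        · simp [TensorProduct.smul_tmul', TensorProduct.assoc_tmul]
        · simp
      have l3 : (TensorProduct.assoc K A A A) ((LinearMap.rTensor A Δ)
          (∑ u : ∀ i, Fin (a i), ∑ w : ∀ i, Fin (a i),
            if u ≠ v0 ∧ u ≠ va ∧ w ≠ v0 ∧ w ≠ va then g u w • (x u ⊗ₜ[K] x w) else 0)) =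
          (∑ u : ∀ i, Fin (a i), ∑ w : ∀ i, Fin (a i),
            if u ≠ v0 ∧ u ≠ va ∧ w ≠ v0 ∧ w ≠ va then
              g u w • (x v0 ⊗ₜ[K] (x u ⊗ₜ[K] x w)) else 0) +
          (∑ u : ∀ i, Fin (a i), ∑ w : ∀ i, Fin (a i),
            if u ≠ v0 ∧ u ≠ va ∧ w ≠ v0 ∧ w ≠ va then
              g u w • (x u ⊗ₜ[K] (x v0 ⊗ₜ[K] x w)) else 0) := by
        simp only [map_sum]
        rw [← Finset.sum_add_distrib]
        refine Finset.sum_congr rfl fun u _ => ?_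
        rw [← Finset.sum_add_distrib]
        refine Finset.sum_congr rfl fun w _ => ?_
        split_ifs with h
        · rw [map_smul, LinearMap.rTensor_tmul, hΔmid u h.1 h.2.1, map_smul]
          simp [TensorProduct.add_tmul, TensorProduct.assoc_tmul, smul_add]
        · simp
      have r1 : (LinearMap.lTensor A Δ) (x v0 ⊗ₜ[K] x va) =
          x v0 ⊗ₜ[K] (x v0 ⊗ₜ[K] x va) + x v0 ⊗ₜ[K] (x va ⊗ₜ[K] x v0) +
          ∑ u : ∀ i, Fin (a i), ∑ w : ∀ i, Fin (a i),
            if u ≠ v0 ∧ u ≠ va ∧ w ≠ v0 ∧ w ≠ va then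
              g u w • (x v0 ⊗ₜ[K] (x u ⊗ₜ[K] x w)) else 0 := by
        rw [LinearMap.lTensor_tmul, hΔtop]
        simp only [TensorProduct.tmul_add, TensorProduct.tmul_sum]
        congr 1
        refine Finset.sum_congr rfl fun u _ => Finset.sum_congr rfl fun w _ => ?_
        split_ifs with h
        · rw [TensorProduct.tmul_smul]
        · rw [TensorProduct.tmul_zero]
      have r2 : (LinearMap.lTensor A Δ) (x va ⊗ₜ[K] x v0) =
          x va ⊗ₜ[K] (x v0 ⊗ₜ[K] x v0) := by
        rw [LinearMap.lTensor_tmul, hΔ0]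
      have r3 : (LinearMap.lTensor A Δ)
          (∑ u : ∀ i, Fin (a i), ∑ w : ∀ i, Fin (a i),
            if u ≠ v0 ∧ u ≠ va ∧ w ≠ v0 ∧ w ≠ va then g u w • (x u ⊗ₜ[K] x w) else 0) =
          (∑ u : ∀ i, Fin (a i), ∑ w : ∀ i, Fin (a i),
            if u ≠ v0 ∧ u ≠ va ∧ w ≠ v0 ∧ w ≠ va then
              g u w • (x u ⊗ₜ[K] (x v0 ⊗ₜ[K] x w)) else 0) +
          (∑ u : ∀ i, Fin (a i), ∑ w : ∀ i, Fin (a i),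
            if u ≠ v0 ∧ u ≠ va ∧ w ≠ v0 ∧ w ≠ va then
              g u w • (x u ⊗ₜ[K] (x w ⊗ₜ[K] x v0)) else 0) := by
        simp only [map_sum]
        rw [← Finset.sum_add_distrib]
        refine Finset.sum_congr rfl fun u _ => ?_
        rw [← Finset.sum_add_distrib]
        refine Finset.sum_congr rfl fun w _ => ?_
        split_ifs with h
        · rw [map_smul, LinearMap.lTensor_tmul, hΔmid w h.2.2.1 h.2.2.2]
          simp [TensorProduct.tmul_add, smul_add]
        · simp
      rw [hΔtop]
      simp only [map_add]
      rw [l1, l2, l3, r1, r2, r3]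
      abel
    · rw [hΔmid v h0 hA]
      simp only [map_add, LinearMap.rTensor_tmul, LinearMap.lTensor_tmul, hΔ0,
        hΔmid v h0 hA, TensorProduct.add_tmul, TensorProduct.tmul_add, map_add,
        TensorProduct.assoc_tmul]
      abel
  · intro y
    refine basis_case
      ((TensorProduct.lid K A).toLinearMap ∘ₗ LinearMap.rTensor A eps ∘ₗ Δ)
      LinearMap.id ?_ y
    intro v
    simp only [LinearMap.comp_apply, LinearEquiv.coe_coe, LinearMap.id_apply]
    by_cases h0 : v = v0
    · subst h0; simp [hΔ0, heps]
    by_cases hA : v = va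
    · rw [hA, hΔtop]
      have hz : ∀ u w : (∀ i, Fin (a i)),
          (TensorProduct.lid K A) ((LinearMap.rTensor A eps)
            (if u ≠ v0 ∧ u ≠ va ∧ w ≠ v0 ∧ w ≠ va then g u w • (x u ⊗ₜ[K] x w) else 0)) = 0 := by
        intro u w
        split_ifs with h
        · simp [heps, if_neg h.1]
        · simp
      simp [hz, heps, if_neg hne.symm, hne]
    · rw [hΔmid v h0 hA]
      simp [heps, if_neg h0]
  · intro y
    refine basis_case
      ((TensorProduct.rid K A).toLinearMap ∘ₗ LinearMap.lTensor A eps ∘ₗ Δ)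
      LinearMap.id ?_ y
    intro v
    simp only [LinearMap.comp_apply, LinearEquiv.coe_coe, LinearMap.id_apply]
    by_cases h0 : v = v0
    · subst h0; simp [hΔ0, heps]
    by_cases hA : v = va
    · rw [hA, hΔtop]
      have hz : ∀ u w : (∀ i, Fin (a i)),
          (TensorProduct.rid K A) ((LinearMap.lTensor A eps)
            (if u ≠ v0 ∧ u ≠ va ∧ w ≠ v0 ∧ w ≠ va then g u w • (x u ⊗ₜ[K] x w) else 0)) = 0 := by
        intro u w
        split_ifs with h
        · simp [heps, if_neg h.2.2.1]
        · simp
      simp [hz, heps, if_neg hne.symm, hne]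
    · rw [hΔmid v h0 hA]
      simp [heps, if_neg h0]
  · haveI : Module.Finite K A := Module.Finite.of_basis x
    set L : A →ₗ[K] A ⊗[K] A :=
      Δ - (TensorProduct.mk K A A (x v0) + (TensorProduct.mk K A A).flip (x v0)) with hL
    have hker : ∀ v, v ≠ v0 → v ≠ va → x v ∈ LinearMap.ker L := by
      intro v h1 h2
      simp only [hL, LinearMap.mem_ker, LinearMap.sub_apply, LinearMap.add_apply,
        TensorProduct.mk_apply, LinearMap.flip_apply, hΔmid v h1 h2]
      abel
    set S : Finset (∀ i, Fin (a i)) := Finset.univ \ {v0, va} with hS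
    have hmem : ∀ v : S, (v : ∀ i, Fin (a i)) ≠ v0 ∧ (v : ∀ i, Fin (a i)) ≠ va := by
      intro v
      have h2 : (v : ∀ i, Fin (a i)) ∈ Finset.univ \ ({v0, va} : Finset _) := v.2
      rw [Finset.mem_sdiff, Finset.mem_insert, Finset.mem_singleton] at h2
      exact ⟨fun h => h2.2 (Or.inl h), fun h => h2.2 (Or.inr h)⟩
    have hind : LinearIndependent K
        (fun v : S => (⟨x v, hker v (hmem v).1 (hmem v).2⟩ : LinearMap.ker L)) := by
      apply LinearIndependent.of_comp (LinearMap.ker L).subtype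
      have heq : ((LinearMap.ker L).subtype ∘ fun v : S =>
          (⟨x v, hker v (hmem v).1 (hmem v).2⟩ : LinearMap.ker L)) =
          (x ∘ (fun v : S => (v : ∀ i, Fin (a i)))) := rfl
      rw [heq]
      exact x.linearIndependent.comp _ Subtype.val_injective
    have hcard := hind.fintype_card_le_finrank
    have hScard : Fintype.card S = (∏ i : Fin n, a i) - 2 := by
      rw [Fintype.card_coe, hS, Finset.card_sdiff_of_subset (by simp), Finset.card_pair hne]
      simp [Fintype.card_pi]
    omega
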